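/- Let S ∈ I1 ∩ I2 be a common independent set of matroids M1, M2 such that shortest (s,t)-paths in the exchange graph G(S) have length 4, and let Π = (B1, A1, B2) be an augmenting set in G(S). Then S ⊕ Π := (S ∪ B1 ∪ B2) ∖ A1 is a common independent set, and |S ⊕ Π| = |S| + |B1| (equivalently |S| + w where w is the width). -/

import Mathlib

open Set

variable {α : Type*}

/-- Vertices of the exchange graph: `Sum.inl v` is an element of the ground set,
`Sum.inr false` is the source `s`, `Sum.inr true` is the sink `t`. -/
abbrev ExV (α : Type*) := α ⊕ Bool

/-- Adjacency in the exchange graph `G(S)` of the common independent set `S`. -/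
def exAdj (M₁ M₂ : Matroid α) (S : Set α) : ExV α → ExV α → Prop
  | Sum.inl u, Sum.inl v =>
      (u ∈ S ∧ v ∉ S ∧ M₁.Indep (insert v (S \ {u}))) ∨
      (u ∉ S ∧ v ∈ S ∧ M₂.Indep (insert u (S \ {v})))
  | Sum.inr false, Sum.inl v => v ∉ S ∧ M₁.Indep (insert v S)
  | Sum.inl v, Sum.inr true => v ∉ S ∧ M₂.Indep (insert v S)
  | _, _ => False

/-- `l` is an `(s,t)`-path (list of vertices) in the exchange graph `G(S)`.
Its length (number of edges) is `l.length - 1`. -/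
def IsSTPath (M₁ M₂ : Matroid α) (S : Set α) (l : List (ExV α)) : Prop :=
  l.Chain' (exAdj M₁ M₂ S) ∧ l.head? = some (Sum.inr false) ∧
    l.getLast? = some (Sum.inr true)

/-- `l` is a path from `s` to the element `v` in the exchange graph `G(S)`. -/
def IsSPathTo (M₁ M₂ : Matroid α) (S : Set α) (v : α) (l : List (ExV α)) : Prop :=
  l.Chain' (exAdj M₁ M₂ S) ∧ l.head? = some (Sum.inr false) ∧
    l.getLast? = some (Sum.inl v)

/-- `v` is at distance exactly `i` from `s` in the exchange graph `G(S)`;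
i.e. `v ∈ D_i`. -/
def InLayer (M₁ M₂ : Matroid α) (S : Set α) (i : ℕ) (v : α) : Prop :=
  (∃ l, IsSPathTo M₁ M₂ S v l ∧ l.length = i + 1) ∧
    ∀ l, IsSPathTo M₁ M₂ S v l → i + 1 ≤ l.length

/-- Shortest `(s,t)`-paths in `G(S)` have length exactly `4`. -/
def ShortestAugLenFour (M₁ M₂ : Matroid α) (S : Set α) : Prop :=
  (∃ l, IsSTPath M₁ M₂ S l ∧ l.length = 5) ∧
    ∀ l, IsSTPath M₁ M₂ S l → 5 ≤ l.length

/-- `(B₁, A₁, B₂)` is an augmenting set in `G(S)`. -/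
def IsAugSet (M₁ M₂ : Matroid α) (S B₁ A₁ B₂ : Set α) : Prop :=
  (∀ v ∈ B₁, InLayer M₁ M₂ S 1 v) ∧ (∀ v ∈ A₁, InLayer M₁ M₂ S 2 v) ∧
  (∀ v ∈ B₂, InLayer M₁ M₂ S 3 v) ∧
  B₁.ncard = A₁.ncard ∧ A₁.ncard = B₂.ncard ∧
  M₁.Indep (S ∪ B₁) ∧ M₂.Indep ((S ∪ B₁) \ A₁) ∧
  M₁.Indep ((S \ A₁) ∪ B₂) ∧ M₂.Indep (S ∪ B₂)


section AuxLemmas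

lemma key_exchange (M : Matroid α) (hfinE : M.E.Finite) {S T B : Set α}
    (hS : M.Indep S) (hT : M.Indep T) (hTcl : T ⊆ M.closure S)
    (hcard : T.encard = S.encard) (hSB : M.Indep (S ∪ B))
    (hdisj : Disjoint B (M.closure S)) : M.Indep (T ∪ B) := by
  have hScl : M.IsBasis S (M.closure S) := hS.isBasis_closure
  have hTbasis : M.IsBasis T (M.closure S) := by
    obtain ⟨T', hT', hTT'⟩ := hT.subset_isBasis_of_subset hTcl (M.closure_subset_ground S)
    have hTfin : T'.Finite := hfinE.subset hT'.indep.subset_ground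
    have : T = T' := by
      refine hTfin.eq_of_subset_of_encard_le' hTT' ?_
      rw [hT'.encard_eq_encard hScl, ← hcard]
    rwa [this]
  have hclT : M.closure S = M.closure T := by
    rw [hTbasis.closure_eq_closure, M.closure_closure]
  have hBE : B ⊆ M.E := subset_union_right.trans hSB.subset_ground
  have hXE : M.closure S ∪ B ⊆ M.E := union_subset (M.closure_subset_ground S) hBE
  obtain ⟨J, hJ, hTJ⟩ := hT.subset_isBasis_of_subset
    (hTcl.trans subset_union_left : T ⊆ M.closure S ∪ B) hXE
  have hJsub : J ⊆ T ∪ B := by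
    intro x hx
    by_contra hxn
    simp only [mem_union, not_or] at hxn
    have hxcl : x ∈ M.closure T := by
      have := hJ.subset hx
      rcases this with h | h
      · rwa [← hclT]
      · exact absurd h hxn.2
    exact hJ.indep.notMem_closure_diff_of_mem hx
      ((M.closure_subset_closure (subset_diff_singleton hTJ (by simp [hxn.1]))) hxcl)
  have hSBdisj : Disjoint S B := (hdisj.mono_right (M.subset_closure S hS.subset_ground)).symm
  have hcard2 : (S ∪ B).encard ≤ J.encard := by
    obtain ⟨J', hJ', hsub⟩ := hSB.subset_isBasis_of_subset
      (union_subset ((M.subset_closure S hS.subset_ground).trans subset_union_left)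
        subset_union_right) hXE
    calc (S ∪ B).encard ≤ J'.encard := encard_mono hsub
      _ = J.encard := hJ'.encard_eq_encard hJ
  have hJeq : J = T ∪ B := by
    refine (hfinE.subset (union_subset hT.subset_ground hBE)).eq_of_subset_of_encard_le' hJsub ?_
    calc (T ∪ B).encard ≤ T.encard + B.encard := encard_union_le _ _
      _ = (S ∪ B).encard := by rw [hcard, encard_union_eq hSBdisj]
      _ ≤ J.encard := hcard2
  rw [← hJeq]
  exact hJ.indep

lemma layer1_spec {M₁ M₂ : Matroid α} {S : Set α} {v : α}
    (h : InLayer M₁ M₂ S 1 v) : v ∉ S ∧ M₁.Indep (insert v S) := by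
  obtain ⟨⟨l, ⟨hc, hh, hlast⟩, hlen⟩, -⟩ := h
  obtain ⟨a, b, rfl⟩ := List.length_eq_two.1 hlen
  simp only [List.head?] at hh
  simp only [List.getLast?] at hlast
  obtain rfl : a = Sum.inr false := by injection hh
  obtain rfl : b = Sum.inl v := by simpa using hlast
  simpa [exAdj, List.Chain', List.isChain_cons_cons] using hc

lemma layer2_mem {M₁ M₂ : Matroid α} {S : Set α} {v : α}
    (h : InLayer M₁ M₂ S 2 v) : v ∈ S := by
  obtain ⟨⟨l, ⟨hc, hh, hlast⟩, hlen⟩, -⟩ := h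
  obtain ⟨a, b, c, rfl⟩ := List.length_eq_three.1 hlen
  obtain rfl : a = Sum.inr false := by simpa using hh
  obtain rfl : c = Sum.inl v := by simpa using hlast
  simp only [List.Chain', List.isChain_cons_cons, List.isChain_singleton, and_true] at hc
  obtain ⟨h1, h2⟩ := hc
  match b with
  | Sum.inr _ => exact absurd h1 (by cases ‹Bool› <;> exact fun h => h)
  | Sum.inl u =>
    rcases h2 with ⟨hu, -⟩ | ⟨-, hv, -⟩
    · exact absurd hu h1.1
    · exact hv

lemma layer3_not_mem {M₁ M₂ : Matroid α} {S : Set α} {v : α}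
    (h : InLayer M₁ M₂ S 3 v) : v ∉ S := by
  obtain ⟨⟨l, ⟨hc, hh, hlast⟩, hlen⟩, -⟩ := h
  match l, hlen with
  | [a, b, c, d], _ =>
  obtain rfl : a = Sum.inr false := by simpa using hh
  obtain rfl : d = Sum.inl v := by simpa using hlast
  simp only [List.Chain', List.isChain_cons_cons, List.isChain_singleton, and_true] at hc
  obtain ⟨h1, h2, h3⟩ := hc
  match b with
  | Sum.inr _ => exact absurd h1 (by cases ‹Bool› <;> exact fun h => h)
  | Sum.inl u₁ =>
  match c with
  | Sum.inr bb =>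
      cases bb
      · exact absurd h2 (fun h => h)
      · exact absurd h3 (fun h => h)
  | Sum.inl u₂ =>
    have hu₂ : u₂ ∈ S := by
      rcases h2 with ⟨hu, -⟩ | ⟨-, hv, -⟩
      · exact absurd hu h1.1
      · exact hv
    rcases h3 with ⟨-, hv, -⟩ | ⟨hu, -⟩
    · exact hv
    · exact absurd hu₂ hu

end AuxLemmas

/-- If shortest augmenting paths in `G(S)` have length `4` and
`Π = (B₁, A₁, B₂)` is an augmenting set, then `S ⊕ Π = (S ∪ B₁ ∪ B₂) ∖ A₁` is
a common independent set of size `|S| + |B₁|`. -/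
theorem augset_augment {α : Type*} (M₁ M₂ : Matroid α)
    (hE : M₂.E = M₁.E) (hfin : M₁.E.Finite)
    (S : Set α) (hS₁ : M₁.Indep S) (hS₂ : M₂.Indep S)
    (hlen : ShortestAugLenFour M₁ M₂ S)
    (B₁ A₁ B₂ : Set α) (haug : IsAugSet M₁ M₂ S B₁ A₁ B₂) :
    M₁.Indep ((S ∪ B₁ ∪ B₂) \ A₁) ∧ M₂.Indep ((S ∪ B₁ ∪ B₂) \ A₁) ∧
      ((S ∪ B₁ ∪ B₂) \ A₁).ncard = S.ncard + B₁.ncard := by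
  obtain ⟨hL1, hL2, hL3, hc1, hc2, hI1, hI2, hI3, hI4⟩ := haug
  -- basic membership facts
  have hA₁S : A₁ ⊆ S := fun v hv => layer2_mem (hL2 v hv)
  have hB₁S : ∀ v ∈ B₁, v ∉ S := fun v hv => (layer1_spec (hL1 v hv)).1
  have hB₂S : ∀ v ∈ B₂, v ∉ S := fun v hv => layer3_not_mem (hL3 v hv)
  have hB₁B₂ : ∀ v ∈ B₁, v ∉ B₂ := by
    intro v hv1 hv2
    obtain ⟨⟨l, hl, hlen⟩, -⟩ := hL1 v hv1
    have := (hL3 v hv2).2 l hl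
    omega
  have hB₁A₁ : ∀ v ∈ B₁, v ∉ A₁ := fun v hv ha => hB₁S v hv (hA₁S ha)
  have hB₂A₁ : ∀ v ∈ B₂, v ∉ A₁ := fun v hv ha => hB₂S v hv (hA₁S ha)
  -- non-independence facts from path-length minimality
  have hB₁not₂ : ∀ v ∈ B₁, ¬ M₂.Indep (insert v S) := by
    intro v hv hind
    obtain ⟨hvS, hv1⟩ := layer1_spec (hL1 v hv)
    have hpath : IsSTPath M₁ M₂ S [Sum.inr false, Sum.inl v, Sum.inr true] := by
      refine ⟨?_, rfl, by simp⟩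
      simp only [List.Chain', List.isChain_cons_cons, List.isChain_singleton, and_true]
      exact ⟨⟨hvS, hv1⟩, hvS, hind⟩
    have := hlen.2 _ hpath
    simp at this
  have hB₂not₁ : ∀ v ∈ B₂, ¬ M₁.Indep (insert v S) := by
    intro v hv hind
    have hvS := hB₂S v hv
    have hpath : IsSPathTo M₁ M₂ S v [Sum.inr false, Sum.inl v] := by
      refine ⟨?_, rfl, by simp⟩
      simp only [List.Chain', List.isChain_cons_cons, List.isChain_singleton, and_true]
      exact ⟨hvS, hind⟩
    have := (hL3 v hv).2 _ hpath
    simp at this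
  -- closure facts
  have hB₂cl : B₂ ⊆ M₁.closure S := by
    intro v hv
    have hvE : v ∈ M₁.E := hI3.subset_ground (mem_union_right _ hv)
    by_contra hncl
    exact hB₂not₁ v hv (hS₁.insert_indep_iff.2 (Or.inl ⟨hvE, hncl⟩))
  have hB₁cl₂ : B₁ ⊆ M₂.closure S := by
    intro v hv
    have hvE : v ∈ M₂.E := by
      rw [hE]
      exact (layer1_spec (hL1 v hv)).2.subset_ground (mem_insert _ _)
    by_contra hncl
    exact hB₁not₂ v hv (hS₂.insert_indep_iff.2 (Or.inl ⟨hvE, hncl⟩))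
  have hB₁ncl₁ : Disjoint B₁ (M₁.closure S) := by
    rw [disjoint_left]
    intro v hv hcl
    rcases hS₁.insert_indep_iff.1 (layer1_spec (hL1 v hv)).2 with ⟨-, h⟩ | h
    · exact h hcl
    · exact hB₁S v hv h
  have hB₂ncl₂ : Disjoint B₂ (M₂.closure S) := by
    rw [disjoint_left]
    intro v hv hcl
    have hind : M₂.Indep (insert v S) :=
      hI4.subset (insert_subset (mem_union_right _ hv) subset_union_left)
    rcases hS₂.insert_indep_iff.1 hind with ⟨-, h⟩ | h
    · exact h hcl
    · exact hB₂S v hv h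
  -- finiteness
  have hSfin : S.Finite := hfin.subset hS₁.subset_ground
  have hA₁fin : A₁.Finite := hSfin.subset hA₁S
  have hB₁fin : B₁.Finite := hfin.subset (subset_union_right.trans hI1.subset_ground)
  have hB₂fin : B₂.Finite := hfin.subset (subset_union_right.trans hI3.subset_ground)
  -- encard equalities
  have heA₁B₂ : A₁.encard = B₂.encard := by
    rw [← hA₁fin.cast_ncard_eq, ← hB₂fin.cast_ncard_eq, hc2]
  have heB₁A₁ : B₁.encard = A₁.encard := by
    rw [← hB₁fin.cast_ncard_eq, ← hA₁fin.cast_ncard_eq, hc1]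
  have hdSA : Disjoint (S \ A₁) B₂ :=
    disjoint_left.2 fun v hv hv2 => hB₂S v hv2 hv.1
  have hdSB₁ : Disjoint (S \ A₁) B₁ :=
    disjoint_left.2 fun v hv hv1 => hB₁S v hv1 hv.1
  have heT₁ : ((S \ A₁) ∪ B₂).encard = S.encard := by
    rw [encard_union_eq hdSA, ← heA₁B₂, encard_diff_add_encard_of_subset hA₁S]
  -- the two set identities
  have hsplit : (S ∪ B₁) \ A₁ = (S \ A₁) ∪ B₁ := by
    rw [union_diff_distrib, (disjoint_left.2 (hB₁A₁)).sdiff_eq_left]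
  have heT₂ : ((S ∪ B₁) \ A₁).encard = S.encard := by
    rw [hsplit, encard_union_eq hdSB₁, heB₁A₁, encard_diff_add_encard_of_subset hA₁S]
  have hid₁ : (S ∪ B₁ ∪ B₂) \ A₁ = ((S \ A₁) ∪ B₂) ∪ B₁ := by
    ext x
    simp only [mem_diff, mem_union]
    constructor
    · rintro ⟨(h | h) | h, hna⟩
      · exact Or.inl (Or.inl ⟨h, hna⟩)
      · exact Or.inr h
      · exact Or.inl (Or.inr h)
    · rintro ((⟨h, hna⟩ | h) | h)
      · exact ⟨Or.inl (Or.inl h), hna⟩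
      · exact ⟨Or.inr h, hB₂A₁ x h⟩
      · exact ⟨Or.inl (Or.inr h), hB₁A₁ x h⟩
  have hid₂ : (S ∪ B₁ ∪ B₂) \ A₁ = ((S ∪ B₁) \ A₁) ∪ B₂ := by
    ext x
    simp only [mem_diff, mem_union]
    constructor
    · rintro ⟨(h | h) | h, hna⟩
      · exact Or.inl ⟨Or.inl h, hna⟩
      · exact Or.inl ⟨Or.inr h, hna⟩
      · exact Or.inr h
    · rintro (⟨h | h, hna⟩ | h)
      · exact ⟨Or.inl (Or.inl h), hna⟩
      · exact ⟨Or.inl (Or.inr h), hna⟩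
      · exact ⟨Or.inr h, hB₂A₁ x h⟩
  -- M₁-independence
  have hind₁ : M₁.Indep ((S ∪ B₁ ∪ B₂) \ A₁) := by
    rw [hid₁]
    refine key_exchange M₁ hfin hS₁ hI3 ?_ heT₁ hI1 hB₁ncl₁
    exact union_subset ((diff_subset.trans (M₁.subset_closure S hS₁.subset_ground))) hB₂cl
  -- M₂-independence
  have hind₂ : M₂.Indep ((S ∪ B₁ ∪ B₂) \ A₁) := by
    rw [hid₂]
    refine key_exchange M₂ (hE ▸ hfin) hS₂ hI2 ?_ heT₂ hI4 hB₂ncl₂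
    rw [hsplit]
    exact union_subset ((diff_subset.trans (M₂.subset_closure S hS₂.subset_ground))) hB₁cl₂
  refine ⟨hind₁, hind₂, ?_⟩
  -- cardinality
  have hefin : ((S \ A₁) ∪ B₂).Finite := hSfin.diff.union hB₂fin
  have : ((S ∪ B₁ ∪ B₂) \ A₁).encard = S.encard + B₁.encard := by
    rw [hid₁, encard_union_eq ?_, heT₁]
    exact disjoint_left.2 fun v hv hv1 => hv.elim (fun h => hB₁S v hv1 h.1) (hB₁B₂ v hv1)
  have hfin' : ((S ∪ B₁ ∪ B₂) \ A₁).Finite := (hSfin.union (hB₁fin.union hB₂fin)).diff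
    |>.subset (by rw [union_assoc])
  rw [← Nat.cast_inj (R := ℕ∞), hfin'.cast_ncard_eq, Nat.cast_add, hSfin.cast_ncard_eq,
    hB₁fin.cast_ncard_eq, this]
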